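/- For the Ishigami function with uniform inputs on [−π,π]³, the Shapley effects are φ₁ = τ̲²_{{1}} + 4π⁸b²/225, φ₂ = τ̲²_{{2}} = a²/8, and φ₃ = 4π⁸b²/225, where τ̲²_{{1}} = (1/2)(1 + π⁴b/5)². -/

import Mathlib

open MeasureTheory Finset

/-- The ANOVA decomposition component `f_u`, defined recursively by
`f_∅ = μ` (the mean) and
`f_u(x) = ∫ f(x_u, y_{-u}) ρ_{-u}(y_{-u}) dy_{-u} - ∑_{v ⊊ u} f_v(x)`. -/
noncomputable def anova {d : ℕ} (μ : Fin d → Measure ℝ) (f : (Fin d → ℝ) → ℝ) :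
    Finset (Fin d) → (Fin d → ℝ) → ℝ := fun u x =>
  (∫ y, f (fun i => if i ∈ u then x i else y i) ∂Measure.pi μ) -
    ∑ v ∈ (u.powerset.erase u).attach, anova μ f v.1 x
termination_by u => u.card
decreasing_by
  exact Finset.card_lt_card (Finset.ssubset_iff_subset_ne.mpr
    ⟨Finset.mem_powerset.mp (Finset.mem_of_mem_erase v.2), Finset.ne_of_mem_erase v.2⟩)

/-- The ANOVA variance component `σ_u² = ∫ (f_u)² dρ` (note that `f_u` depends only on
the coordinates in `u`, so this agrees with `∫_{Ω_u} (f_u(x_u))² ρ_u(x_u) dx_u`). -/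
noncomputable def sigmaSq {d : ℕ} (μ : Fin d → Measure ℝ) (f : (Fin d → ℝ) → ℝ)
    (u : Finset (Fin d)) : ℝ :=
  ∫ x, (anova μ f u x) ^ 2 ∂Measure.pi μ

/-- The main effect `τ̲²_u = ∑_{∅ ≠ v ⊆ u} σ_v²` (equal to `0` for `u = ∅`). -/
noncomputable def mainEffect {d : ℕ} (μ : Fin d → Measure ℝ) (f : (Fin d → ℝ) → ℝ)
    (u : Finset (Fin d)) : ℝ :=
  ∑ v ∈ u.powerset.erase ∅, sigmaSq μ f v

/-- The total effect `τ̄²_u = ∑_{∅ ≠ v ⊆ [1:d], v ∩ u ≠ ∅} σ_v²` (equal to `0` for `u = ∅`). -/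
noncomputable def totalEffect {d : ℕ} (μ : Fin d → Measure ℝ) (f : (Fin d → ℝ) → ℝ)
    (u : Finset (Fin d)) : ℝ :=
  ∑ v ∈ (Finset.univ : Finset (Fin d)).powerset.filter (fun v => (v ∩ u).Nonempty),
    sigmaSq μ f v

/-- The Shapley effect
`φ_j = (1/d) ∑_{u ⊆ [1:d]∖{j}} C(d-1, |u|)⁻¹ (τ̄²_{u∪{j}} - τ̄²_u)`. -/
noncomputable def shapley {d : ℕ} (μ : Fin d → Measure ℝ) (f : (Fin d → ℝ) → ℝ)
    (j : Fin d) : ℝ :=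
  (1 / (d : ℝ)) * ∑ u ∈ (Finset.univ.erase j).powerset,
    ((d - 1).choose u.card : ℝ)⁻¹ *
      (totalEffect μ f (insert j u) - totalEffect μ f u)

/-- The ANOVA representation of the Shapley effect, `φ_j = ∑_{∅ ≠ u ∋ j} σ_u² / |u|`. -/
noncomputable def shapleyAnova {d : ℕ} (μ : Fin d → Measure ℝ) (f : (Fin d → ℝ) → ℝ)
    (j : Fin d) : ℝ :=
  ∑ u ∈ (Finset.univ : Finset (Fin d)).powerset.filter (fun u => j ∈ u),
    sigmaSq μ f u / (u.card : ℝ)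

/-- The uniform probability measure on `[-π, π]`. -/
noncomputable def unifPi : Measure ℝ :=
  ENNReal.ofReal (2 * Real.pi)⁻¹ • volume.restrict (Set.Icc (-Real.pi) Real.pi)

/-- The Ishigami function `f(x₁,x₂,x₃) = (1 + b x₃⁴) sin x₁ + a (sin x₂)²`. -/
noncomputable def ishigami (a b : ℝ) (x : Fin 3 → ℝ) : ℝ :=
  (1 + b * (x 2) ^ 4) * Real.sin (x 0) + a * (Real.sin (x 1)) ^ 2

noncomputable section IshigamiHelpers
open Real

local notation "P3" => Measure.pi (fun _ : Fin 3 => unifPi)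
local notation "U3" => (fun _ : Fin 3 => unifPi)

instance : IsProbabilityMeasure unifPi := by
  constructor
  rw [unifPi]
  simp [Real.volume_Icc, ← ENNReal.ofReal_mul (by positivity : (0:ℝ) ≤ (2*π)⁻¹)]
  rw [← ENNReal.ofReal_mul (by positivity), show π⁻¹ * 2⁻¹ * (π + π) = 1 from by field_simp; ring]
  simp

lemma unifPi_integrable {g : ℝ → ℝ} (hg : Continuous g) : Integrable g unifPi := by
  unfold unifPi
  exact (hg.integrableOn_Icc).smul_measure ENNReal.ofReal_ne_top

lemma unifPi_integral (g : ℝ → ℝ) :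
    ∫ t, g t ∂unifPi = (2*π)⁻¹ * ∫ t in (-π)..π, g t := by
  rw [unifPi, integral_smul_measure, ENNReal.toReal_ofReal (by positivity),
    MeasureTheory.integral_Icc_eq_integral_Ioc,
    ← intervalIntegral.integral_of_le (by linarith [pi_pos] : -π ≤ π), smul_eq_mul]

lemma int_const (c : ℝ) : ∫ _, c ∂unifPi = c := by simp
lemma int_sin : ∫ t, Real.sin t ∂unifPi = 0 := by
  rw [unifPi_integral, integral_sin]; simp
lemma int_sin_sq : ∫ t, Real.sin t ^ 2 ∂unifPi = 1/2 := by
  rw [unifPi_integral, integral_sin_sq]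
  simp only [Real.sin_neg, Real.sin_pi, neg_zero]
  field_simp; ring
lemma int_sin_pow4 : ∫ t, Real.sin t ^ 4 ∂unifPi = 3/8 := by
  rw [unifPi_integral, show (4:ℕ) = 2 + 2 from rfl, integral_sin_pow, integral_sin_sq]
  simp only [Real.sin_neg, Real.sin_pi, neg_zero]
  field_simp; ring
lemma int_pow4 : ∫ t, t ^ 4 ∂unifPi = π^4/5 := by
  rw [unifPi_integral, integral_pow]
  field_simp; ring
lemma int_pow8 : ∫ t, t ^ 8 ∂unifPi = π^8/9 := by
  rw [unifPi_integral, integral_pow]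
  field_simp; ring

lemma int_comb (c0 c1 c2 : ℝ) (g0 g1 : ℝ → ℝ) (h0 : Continuous g0) (h1 : Continuous g1) :
    ∫ t, (c0 * g0 t + c1 * g1 t + c2) ∂unifPi
      = c0 * (∫ t, g0 t ∂unifPi) + c1 * (∫ t, g1 t ∂unifPi) + c2 := by
  have i0 : Integrable (fun t => c0 * g0 t) unifPi := (unifPi_integrable h0).const_mul c0
  have i1 : Integrable (fun t => c1 * g1 t) unifPi := (unifPi_integrable h1).const_mul c1
  have i01 : Integrable (fun t => c0 * g0 t + c1 * g1 t) unifPi := i0.add i1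
  rw [integral_add i01 (integrable_const c2), integral_add i0 i1,
    MeasureTheory.integral_const_mul, MeasureTheory.integral_const_mul, int_const]

private def msUnif : MeasureSpace ℝ := ⟨unifPi⟩

lemma integral_pi3 (g : Fin 3 → ℝ → ℝ) :
    ∫ y, (g 0 (y 0)) * (g 1 (y 1)) * (g 2 (y 2)) ∂P3 =
      (∫ t, g 0 t ∂unifPi) * (∫ t, g 1 t ∂unifPi) * (∫ t, g 2 t ∂unifPi) := by
  have := MeasureTheory.integral_fintype_prod_eq_prod (E := fun _ : Fin 3 => ℝ) g
    (μ := fun _ => unifPi)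
  simpa [Fin.prod_univ_three, msUnif, MeasureSpace.pi, volume] using this

lemma integrable_pi3 (g : Fin 3 → ℝ → ℝ) (hg : ∀ i, Continuous (g i)) :
    Integrable (fun y => g 0 (y 0) * g 1 (y 1) * g 2 (y 2)) P3 := by
  have := MeasureTheory.Integrable.fintype_prod (f := g)
    (μ := fun _ : Fin 3 => unifPi) (fun i => unifPi_integrable (hg i))
  have h2 : (fun (y : Fin 3 → ℝ) => ∏ i, g i (y i)) =
      fun y => g 0 (y 0) * g 1 (y 1) * g 2 (y 2) := by
    funext y; rw [Fin.prod_univ_three]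
  rw [h2] at this
  exact this

lemma int_sum_prod (g0 g1 g2 h0 h1 h2 : ℝ → ℝ) (c0 : Continuous g0) (c1 : Continuous g1)
    (c2 : Continuous g2) (d0 : Continuous h0) (d1 : Continuous h1) (d2 : Continuous h2) :
    ∫ y, (g0 (y 0) * g1 (y 1) * g2 (y 2) + h0 (y 0) * h1 (y 1) * h2 (y 2)) ∂P3
      = (∫ t, g0 t ∂unifPi) * (∫ t, g1 t ∂unifPi) * (∫ t, g2 t ∂unifPi)
      + (∫ t, h0 t ∂unifPi) * (∫ t, h1 t ∂unifPi) * (∫ t, h2 t ∂unifPi) := by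
  have i1 : Integrable (fun y : Fin 3 → ℝ => g0 (y 0) * g1 (y 1) * g2 (y 2)) P3 := by
    simpa using integrable_pi3 ![g0,g1,g2] (fun i => by fin_cases i <;> simpa)
  have i2 : Integrable (fun y : Fin 3 → ℝ => h0 (y 0) * h1 (y 1) * h2 (y 2)) P3 := by
    simpa using integrable_pi3 ![h0,h1,h2] (fun i => by fin_cases i <;> simpa)
  have e1 : ∫ y, (g0 (y 0) * g1 (y 1) * g2 (y 2)) ∂P3
      = (∫ t, g0 t ∂unifPi) * (∫ t, g1 t ∂unifPi) * (∫ t, g2 t ∂unifPi) := by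
    simpa using integral_pi3 ![g0,g1,g2]
  have e2 : ∫ y, (h0 (y 0) * h1 (y 1) * h2 (y 2)) ∂P3
      = (∫ t, h0 t ∂unifPi) * (∫ t, h1 t ∂unifPi) * (∫ t, h2 t ∂unifPi) := by
    simpa using integral_pi3 ![h0,h1,h2]
  rw [integral_add i1 i2, e1, e2]

lemma anova_eq {d : ℕ} (μ : Fin d → Measure ℝ) (f : (Fin d → ℝ) → ℝ)
    (u : Finset (Fin d)) (x : Fin d → ℝ) :
    anova μ f u x = (∫ y, f (fun i => if i ∈ u then x i else y i) ∂Measure.pi μ) -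
      ∑ v ∈ u.powerset.erase u, anova μ f v x := by
  rw [anova]
  congr 1
  exact Finset.sum_attach (u.powerset.erase u) (fun v => anova μ f v x)

lemma int_prod (g0 g1 g2 : ℝ → ℝ) :
    ∫ y, (g0 (y 0) * g1 (y 1) * g2 (y 2)) ∂P3
      = (∫ t, g0 t ∂unifPi) * (∫ t, g1 t ∂unifPi) * (∫ t, g2 t ∂unifPi) := by
  simpa using integral_pi3 ![g0,g1,g2]

lemma int_one_add_pow4 (b : ℝ) :
    ∫ t, (1 + b * t^4) ∂unifPi = 1 + b * (π^4/5) := by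
  have h : ∫ t, (1 + b * t^4 : ℝ) ∂unifPi
      = (∫ _, (1:ℝ) ∂unifPi) + ∫ t, b * t^4 ∂unifPi :=
    MeasureTheory.integral_add (MeasureTheory.integrable_const 1)
      ((unifPi_integrable (by fun_prop)).const_mul b)
  rw [h, int_const, MeasureTheory.integral_const_mul, int_pow4]

lemma int_a_sin_sq (a : ℝ) : ∫ t, a * Real.sin t ^ 2 ∂unifPi = a / 2 := by
  rw [MeasureTheory.integral_const_mul, int_sin_sq]; ring

lemma anova_e (a b : ℝ) (x : Fin 3 → ℝ) :
    anova U3 (ishigami a b) ∅ x = a / 2 := by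
  rw [anova_eq, show ((∅ : Finset (Fin 3)).powerset.erase ∅) = ∅ from by decide,
    Finset.sum_empty]
  have hf : (fun y : Fin 3 → ℝ =>
        ishigami a b fun i => if i ∈ (∅ : Finset (Fin 3)) then x i else y i)
      = fun y => Real.sin (y 0) * 1 * (1 + b * (y 2)^4) + 1 * (a * Real.sin (y 1)^2) * 1 := by
    funext y; simp [ishigami]; ring
  have key : ∫ y, (Real.sin (y 0) * 1 * (1 + b * (y 2)^4)
        + 1 * (a * Real.sin (y 1)^2) * 1 : ℝ) ∂P3
      = (∫ t, Real.sin t ∂unifPi) * (∫ _, (1:ℝ) ∂unifPi) * (∫ t, (1 + b * t^4) ∂unifPi)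
      + (∫ _, (1:ℝ) ∂unifPi) * (∫ t, a * Real.sin t^2 ∂unifPi) * (∫ _, (1:ℝ) ∂unifPi) :=
    int_sum_prod Real.sin (fun _ => (1:ℝ)) (fun t => 1 + b * t^4) (fun _ => (1:ℝ))
      (fun t => a * Real.sin t^2) (fun _ => (1:ℝ)) (by fun_prop) (by fun_prop) (by fun_prop)
      (by fun_prop) (by fun_prop) (by fun_prop)
  rw [hf, key, int_sin, int_const, int_one_add_pow4, int_a_sin_sq]
  ring


lemma anova_s0 (a b : ℝ) (x : Fin 3 → ℝ) :
    anova U3 (ishigami a b) {0} x = (1 + b*(π^4/5)) * Real.sin (x 0) := by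
  rw [anova_eq, show (({0} : Finset (Fin 3)).powerset.erase {0}) = {∅} from by decide]
  rw [Finset.sum_singleton, anova_e]
  have hf : (fun y : Fin 3 → ℝ =>
        ishigami a b fun i => if i ∈ ({0} : Finset (Fin 3)) then x i else y i)
      = fun y => Real.sin (x 0) * 1 * (1 + b * (y 2)^4) + 1 * (a * Real.sin (y 1)^2) * 1 := by
    funext y; simp [ishigami]; ring
  have key : ∫ y, (Real.sin (x 0) * 1 * (1 + b * (y 2)^4) + 1 * (a * Real.sin (y 1)^2) * 1 : ℝ) ∂P3
      = (∫ _, Real.sin (x 0) ∂unifPi) * (∫ _, (1:ℝ) ∂unifPi) * (∫ t, (1 + b * t^4) ∂unifPi)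
      + (∫ _, (1:ℝ) ∂unifPi) * (∫ t, a * Real.sin t^2 ∂unifPi) * (∫ _, (1:ℝ) ∂unifPi) :=
    int_sum_prod (fun _ => Real.sin (x 0)) (fun _ => (1:ℝ)) (fun t => 1 + b * t^4) (fun _ => (1:ℝ)) (fun t => a * Real.sin t^2) (fun _ => (1:ℝ)) (by fun_prop) (by fun_prop) (by fun_prop)
      (by fun_prop) (by fun_prop) (by fun_prop)
  rw [hf, key]
  simp only [int_const, int_sin, int_one_add_pow4, int_a_sin_sq]
  ring


lemma anova_s1 (a b : ℝ) (x : Fin 3 → ℝ) :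
    anova U3 (ishigami a b) {1} x = a * (Real.sin (x 1)^2 - 1/2) := by
  rw [anova_eq, show (({1} : Finset (Fin 3)).powerset.erase {1}) = {∅} from by decide]
  rw [Finset.sum_singleton, anova_e]
  have hf : (fun y : Fin 3 → ℝ =>
        ishigami a b fun i => if i ∈ ({1} : Finset (Fin 3)) then x i else y i)
      = fun y => Real.sin (y 0) * 1 * (1 + b * (y 2)^4) + 1 * (a * Real.sin (x 1)^2) * 1 := by
    funext y; simp [ishigami]; ring
  have key : ∫ y, (Real.sin (y 0) * 1 * (1 + b * (y 2)^4) + 1 * (a * Real.sin (x 1)^2) * 1 : ℝ) ∂P3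
      = (∫ t, Real.sin t ∂unifPi) * (∫ _, (1:ℝ) ∂unifPi) * (∫ t, (1 + b * t^4) ∂unifPi)
      + (∫ _, (1:ℝ) ∂unifPi) * (∫ _, a * Real.sin (x 1)^2 ∂unifPi) * (∫ _, (1:ℝ) ∂unifPi) :=
    int_sum_prod (Real.sin) (fun _ => (1:ℝ)) (fun t => 1 + b * t^4) (fun _ => (1:ℝ)) (fun _ => a * Real.sin (x 1)^2) (fun _ => (1:ℝ)) (by fun_prop) (by fun_prop) (by fun_prop)
      (by fun_prop) (by fun_prop) (by fun_prop)
  rw [hf, key]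
  simp only [int_const, int_sin, int_one_add_pow4, int_a_sin_sq]
  ring


lemma anova_s2 (a b : ℝ) (x : Fin 3 → ℝ) :
    anova U3 (ishigami a b) {2} x = 0 := by
  rw [anova_eq, show (({2} : Finset (Fin 3)).powerset.erase {2}) = {∅} from by decide]
  rw [Finset.sum_singleton, anova_e]
  have hf : (fun y : Fin 3 → ℝ =>
        ishigami a b fun i => if i ∈ ({2} : Finset (Fin 3)) then x i else y i)
      = fun y => Real.sin (y 0) * 1 * (1 + b * (x 2)^4) + 1 * (a * Real.sin (y 1)^2) * 1 := by
    funext y; simp [ishigami]; ring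
  have key : ∫ y, (Real.sin (y 0) * 1 * (1 + b * (x 2)^4) + 1 * (a * Real.sin (y 1)^2) * 1 : ℝ) ∂P3
      = (∫ t, Real.sin t ∂unifPi) * (∫ _, (1:ℝ) ∂unifPi) * (∫ _, (1 + b * (x 2)^4) ∂unifPi)
      + (∫ _, (1:ℝ) ∂unifPi) * (∫ t, a * Real.sin t^2 ∂unifPi) * (∫ _, (1:ℝ) ∂unifPi) :=
    int_sum_prod (Real.sin) (fun _ => (1:ℝ)) (fun _ => 1 + b * (x 2)^4) (fun _ => (1:ℝ)) (fun t => a * Real.sin t^2) (fun _ => (1:ℝ)) (by fun_prop) (by fun_prop) (by fun_prop)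
      (by fun_prop) (by fun_prop) (by fun_prop)
  rw [hf, key]
  simp only [int_const, int_sin, int_one_add_pow4, int_a_sin_sq]
  ring


lemma anova_s01 (a b : ℝ) (x : Fin 3 → ℝ) :
    anova U3 (ishigami a b) {0,1} x = 0 := by
  rw [anova_eq, show (({0,1} : Finset (Fin 3)).powerset.erase {0,1}) = {∅, {0}, {1}} from by decide]
  rw [Finset.sum_insert (by decide), Finset.sum_insert (by decide), Finset.sum_singleton, anova_e, anova_s0, anova_s1]
  have hf : (fun y : Fin 3 → ℝ =>
        ishigami a b fun i => if i ∈ ({0,1} : Finset (Fin 3)) then x i else y i)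
      = fun y => Real.sin (x 0) * 1 * (1 + b * (y 2)^4) + 1 * (a * Real.sin (x 1)^2) * 1 := by
    funext y; simp [ishigami]; ring
  have key : ∫ y, (Real.sin (x 0) * 1 * (1 + b * (y 2)^4) + 1 * (a * Real.sin (x 1)^2) * 1 : ℝ) ∂P3
      = (∫ _, Real.sin (x 0) ∂unifPi) * (∫ _, (1:ℝ) ∂unifPi) * (∫ t, (1 + b * t^4) ∂unifPi)
      + (∫ _, (1:ℝ) ∂unifPi) * (∫ _, a * Real.sin (x 1)^2 ∂unifPi) * (∫ _, (1:ℝ) ∂unifPi) :=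
    int_sum_prod (fun _ => Real.sin (x 0)) (fun _ => (1:ℝ)) (fun t => 1 + b * t^4) (fun _ => (1:ℝ)) (fun _ => a * Real.sin (x 1)^2) (fun _ => (1:ℝ)) (by fun_prop) (by fun_prop) (by fun_prop)
      (by fun_prop) (by fun_prop) (by fun_prop)
  rw [hf, key]
  simp only [int_const, int_sin, int_one_add_pow4, int_a_sin_sq]
  ring


lemma anova_s02 (a b : ℝ) (x : Fin 3 → ℝ) :
    anova U3 (ishigami a b) {0,2} x = b * ((x 2)^4 - π^4/5) * Real.sin (x 0) := by
  rw [anova_eq, show (({0,2} : Finset (Fin 3)).powerset.erase {0,2}) = {∅, {0}, {2}} from by decide]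
  rw [Finset.sum_insert (by decide), Finset.sum_insert (by decide), Finset.sum_singleton, anova_e, anova_s0, anova_s2]
  have hf : (fun y : Fin 3 → ℝ =>
        ishigami a b fun i => if i ∈ ({0,2} : Finset (Fin 3)) then x i else y i)
      = fun y => Real.sin (x 0) * 1 * (1 + b * (x 2)^4) + 1 * (a * Real.sin (y 1)^2) * 1 := by
    funext y; simp [ishigami]; ring
  have key : ∫ y, (Real.sin (x 0) * 1 * (1 + b * (x 2)^4) + 1 * (a * Real.sin (y 1)^2) * 1 : ℝ) ∂P3
      = (∫ _, Real.sin (x 0) ∂unifPi) * (∫ _, (1:ℝ) ∂unifPi) * (∫ _, (1 + b * (x 2)^4) ∂unifPi)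
      + (∫ _, (1:ℝ) ∂unifPi) * (∫ t, a * Real.sin t^2 ∂unifPi) * (∫ _, (1:ℝ) ∂unifPi) :=
    int_sum_prod (fun _ => Real.sin (x 0)) (fun _ => (1:ℝ)) (fun _ => 1 + b * (x 2)^4) (fun _ => (1:ℝ)) (fun t => a * Real.sin t^2) (fun _ => (1:ℝ)) (by fun_prop) (by fun_prop) (by fun_prop)
      (by fun_prop) (by fun_prop) (by fun_prop)
  rw [hf, key]
  simp only [int_const, int_sin, int_one_add_pow4, int_a_sin_sq]
  ring


lemma anova_s12 (a b : ℝ) (x : Fin 3 → ℝ) :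
    anova U3 (ishigami a b) {1,2} x = 0 := by
  rw [anova_eq, show (({1,2} : Finset (Fin 3)).powerset.erase {1,2}) = {∅, {1}, {2}} from by decide]
  rw [Finset.sum_insert (by decide), Finset.sum_insert (by decide), Finset.sum_singleton, anova_e, anova_s1, anova_s2]
  have hf : (fun y : Fin 3 → ℝ =>
        ishigami a b fun i => if i ∈ ({1,2} : Finset (Fin 3)) then x i else y i)
      = fun y => Real.sin (y 0) * 1 * (1 + b * (x 2)^4) + 1 * (a * Real.sin (x 1)^2) * 1 := by
    funext y; simp [ishigami]; ring
  have key : ∫ y, (Real.sin (y 0) * 1 * (1 + b * (x 2)^4) + 1 * (a * Real.sin (x 1)^2) * 1 : ℝ) ∂P3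
      = (∫ t, Real.sin t ∂unifPi) * (∫ _, (1:ℝ) ∂unifPi) * (∫ _, (1 + b * (x 2)^4) ∂unifPi)
      + (∫ _, (1:ℝ) ∂unifPi) * (∫ _, a * Real.sin (x 1)^2 ∂unifPi) * (∫ _, (1:ℝ) ∂unifPi) :=
    int_sum_prod (Real.sin) (fun _ => (1:ℝ)) (fun _ => 1 + b * (x 2)^4) (fun _ => (1:ℝ)) (fun _ => a * Real.sin (x 1)^2) (fun _ => (1:ℝ)) (by fun_prop) (by fun_prop) (by fun_prop)
      (by fun_prop) (by fun_prop) (by fun_prop)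
  rw [hf, key]
  simp only [int_const, int_sin, int_one_add_pow4, int_a_sin_sq]
  ring


lemma anova_s012 (a b : ℝ) (x : Fin 3 → ℝ) :
    anova U3 (ishigami a b) {0,1,2} x = 0 := by
  rw [anova_eq, show (({0,1,2} : Finset (Fin 3)).powerset.erase {0,1,2})
      = {∅, {0}, {1}, {2}, {0,1}, {0,2}, {1,2}} from by decide]
  rw [Finset.sum_insert (by decide), Finset.sum_insert (by decide),
    Finset.sum_insert (by decide), Finset.sum_insert (by decide),
    Finset.sum_insert (by decide), Finset.sum_insert (by decide), Finset.sum_singleton,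
    anova_e, anova_s0, anova_s1, anova_s2, anova_s01, anova_s02, anova_s12]
  have hf : (fun y : Fin 3 → ℝ =>
        ishigami a b fun i => if i ∈ ({0,1,2} : Finset (Fin 3)) then x i else y i)
      = fun _ => ishigami a b x := by
    funext y; simp [ishigami]
  rw [hf, MeasureTheory.integral_const]
  simp only [measure_univ, ENNReal.toReal_one, one_smul, ishigami, probReal_univ]
  ring

lemma sig_0 (a b : ℝ) :
    sigmaSq U3 (ishigami a b) {0} = (1 + b*(π^4/5))^2 / 2 := by
  simp only [sigmaSq]
  rw [show (fun x : Fin 3 → ℝ => anova U3 (ishigami a b) {0} x ^ 2)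
      = fun x => ((1 + b*(π^4/5))^2 * Real.sin (x 0)^2) * 1 * 1 from by
    funext x; rw [anova_s0]; ring]
  have key : ∫ x, (((1 + b*(π^4/5))^2 * Real.sin (x 0)^2) * 1 * 1 : ℝ) ∂P3
      = (∫ t, (1 + b*(π^4/5))^2 * Real.sin t^2 ∂unifPi) * (∫ _, (1:ℝ) ∂unifPi)
        * (∫ _, (1:ℝ) ∂unifPi) :=
    int_prod (fun t => (1 + b*(π^4/5))^2 * Real.sin t^2) (fun _ => (1:ℝ)) (fun _ => (1:ℝ))
  rw [key, int_a_sin_sq, int_const]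
  ring

lemma sig_1 (a b : ℝ) :
    sigmaSq U3 (ishigami a b) {1} = a^2 / 8 := by
  simp only [sigmaSq]
  rw [show (fun x : Fin 3 → ℝ => anova U3 (ishigami a b) {1} x ^ 2)
      = fun x => 1 * (a^2 * Real.sin (x 1)^4 + -(a^2) * Real.sin (x 1)^2 + a^2/4) * 1 from by
    funext x; rw [anova_s1]; ring]
  have key : ∫ x, (1 * (a^2 * Real.sin (x 1)^4 + -(a^2) * Real.sin (x 1)^2 + a^2/4) * 1 : ℝ) ∂P3
      = (∫ _, (1:ℝ) ∂unifPi)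
        * (∫ t, (a^2 * Real.sin t^4 + -(a^2) * Real.sin t^2 + a^2/4) ∂unifPi)
        * (∫ _, (1:ℝ) ∂unifPi) :=
    int_prod (fun _ => (1:ℝ)) (fun t => a^2 * Real.sin t^4 + -(a^2) * Real.sin t^2 + a^2/4)
      (fun _ => (1:ℝ))
  have comb : ∫ t, (a^2 * Real.sin t^4 + -(a^2) * Real.sin t^2 + a^2/4) ∂unifPi
      = a^2 * (∫ t, Real.sin t^4 ∂unifPi) + -(a^2) * (∫ t, Real.sin t^2 ∂unifPi) + a^2/4 :=
    int_comb (a^2) (-(a^2)) (a^2/4) (fun t => Real.sin t^4) (fun t => Real.sin t^2)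
      (by fun_prop) (by fun_prop)
  rw [key, comb, int_sin_pow4, int_sin_sq, int_const]
  ring

lemma sig_02 (a b : ℝ) :
    sigmaSq U3 (ishigami a b) {0,2} = 8 * π^8 * b^2 / 225 := by
  simp only [sigmaSq]
  rw [show (fun x : Fin 3 → ℝ => anova U3 (ishigami a b) {0,2} x ^ 2)
      = fun x => Real.sin (x 0)^2 * 1
          * (b^2 * (x 2)^8 + -(2*b^2*(π^4/5)) * (x 2)^4 + b^2*(π^4/5)^2) from by
    funext x; rw [anova_s02]; ring]
  have key : ∫ x, (Real.sin (x 0)^2 * 1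
        * (b^2 * (x 2)^8 + -(2*b^2*(π^4/5)) * (x 2)^4 + b^2*(π^4/5)^2) : ℝ) ∂P3
      = (∫ t, Real.sin t^2 ∂unifPi) * (∫ _, (1:ℝ) ∂unifPi)
        * (∫ t, (b^2 * t^8 + -(2*b^2*(π^4/5)) * t^4 + b^2*(π^4/5)^2) ∂unifPi) :=
    int_prod (fun t => Real.sin t^2) (fun _ => (1:ℝ))
      (fun t => b^2 * t^8 + -(2*b^2*(π^4/5)) * t^4 + b^2*(π^4/5)^2)
  have comb : ∫ t, (b^2 * t^8 + -(2*b^2*(π^4/5)) * t^4 + b^2*(π^4/5)^2) ∂unifPi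
      = b^2 * (∫ t, t^8 ∂unifPi) + -(2*b^2*(π^4/5)) * (∫ t, t^4 ∂unifPi) + b^2*(π^4/5)^2 :=
    int_comb (b^2) (-(2*b^2*(π^4/5))) (b^2*(π^4/5)^2) (fun t => t^8) (fun t => t^4)
      (by fun_prop) (by fun_prop)
  rw [key, comb, int_pow8, int_pow4, int_sin_sq, int_const]
  ring

lemma sig_zero (a b : ℝ) (u : Finset (Fin 3))
    (h : ∀ x : Fin 3 → ℝ, anova U3 (ishigami a b) u x = 0) :
    sigmaSq U3 (ishigami a b) u = 0 := by
  simp only [sigmaSq]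
  rw [show (fun x : Fin 3 → ℝ => anova U3 (ishigami a b) u x ^ 2) = fun _ => (0:ℝ) from by
    funext x; rw [h x]; ring]
  simp

lemma sig_2 (a b : ℝ) : sigmaSq U3 (ishigami a b) {2} = 0 :=
  sig_zero a b _ (anova_s2 a b)
lemma sig_01 (a b : ℝ) : sigmaSq U3 (ishigami a b) {0,1} = 0 :=
  sig_zero a b _ (anova_s01 a b)
lemma sig_12 (a b : ℝ) : sigmaSq U3 (ishigami a b) {1,2} = 0 :=
  sig_zero a b _ (anova_s12 a b)
lemma sig_012 (a b : ℝ) : sigmaSq U3 (ishigami a b) {0,1,2} = 0 :=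
  sig_zero a b _ (anova_s012 a b)

end IshigamiHelpers

/-- Shapley effects of the Ishigami function with independent uniform inputs on
`[-π, π]³`: `φ₁ = τ̲²₁ + 4π⁸b²/225` with `τ̲²₁ = (1/2)(1 + π⁴b/5)²`,
`φ₂ = τ̲²₂ = a²/8`, and `φ₃ = 4π⁸b²/225`. -/
theorem ishigami_shapley_effects (a b : ℝ) (ha : 0 < a) (hb : 0 < b) :
    shapleyAnova (fun _ => unifPi) (ishigami a b) 0 =
      mainEffect (fun _ => unifPi) (ishigami a b) {0} +
        4 * Real.pi ^ 8 * b ^ 2 / 225 ∧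
    mainEffect (fun _ => unifPi) (ishigami a b) {0} =
      (1 / 2) * (1 + Real.pi ^ 4 * b / 5) ^ 2 ∧
    shapleyAnova (fun _ => unifPi) (ishigami a b) 1 =
      mainEffect (fun _ => unifPi) (ishigami a b) {1} ∧
    mainEffect (fun _ => unifPi) (ishigami a b) {1} = a ^ 2 / 8 ∧
    shapleyAnova (fun _ => unifPi) (ishigami a b) 2 =
      4 * Real.pi ^ 8 * b ^ 2 / 225 := by
  have m0 : mainEffect (fun _ => unifPi) (ishigami a b) {0}
      = (1 + b*(Real.pi^4/5))^2 / 2 := by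
    simp only [mainEffect]
    rw [show (({0} : Finset (Fin 3)).powerset.erase ∅) = {{0}} from by decide,
      Finset.sum_singleton, sig_0]
  have m1 : mainEffect (fun _ => unifPi) (ishigami a b) {1} = a^2 / 8 := by
    simp only [mainEffect]
    rw [show (({1} : Finset (Fin 3)).powerset.erase ∅) = {{1}} from by decide,
      Finset.sum_singleton, sig_1]
  have s0 : shapleyAnova (fun _ => unifPi) (ishigami a b) 0
      = (1 + b*(Real.pi^4/5))^2 / 2 + 4 * Real.pi^8 * b^2 / 225 := by
    simp only [shapleyAnova]
    rw [show ((Finset.univ : Finset (Fin 3)).powerset.filter (fun u => (0:Fin 3) ∈ u))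
        = {{0}, {0,1}, {0,2}, {0,1,2}} from by decide,
      Finset.sum_insert (by decide), Finset.sum_insert (by decide),
      Finset.sum_insert (by decide), Finset.sum_singleton,
      sig_0, sig_01, sig_02, sig_012,
      show (({0} : Finset (Fin 3)).card) = 1 from by decide,
      show (({0,1} : Finset (Fin 3)).card) = 2 from by decide,
      show (({0,2} : Finset (Fin 3)).card) = 2 from by decide,
      show (({0,1,2} : Finset (Fin 3)).card) = 3 from by decide]
    norm_num
    ring
  have s1 : shapleyAnova (fun _ => unifPi) (ishigami a b) 1 = a^2 / 8 := by
    simp only [shapleyAnova]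
    rw [show ((Finset.univ : Finset (Fin 3)).powerset.filter (fun u => (1:Fin 3) ∈ u))
        = {{1}, {0,1}, {1,2}, {0,1,2}} from by decide,
      Finset.sum_insert (by decide), Finset.sum_insert (by decide),
      Finset.sum_insert (by decide), Finset.sum_singleton,
      sig_1, sig_01, sig_12, sig_012,
      show (({1} : Finset (Fin 3)).card) = 1 from by decide]
    norm_num
  have s2 : shapleyAnova (fun _ => unifPi) (ishigami a b) 2
      = 4 * Real.pi^8 * b^2 / 225 := by
    simp only [shapleyAnova]
    rw [show ((Finset.univ : Finset (Fin 3)).powerset.filter (fun u => (2:Fin 3) ∈ u))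
        = {{2}, {0,2}, {1,2}, {0,1,2}} from by decide,
      Finset.sum_insert (by decide), Finset.sum_insert (by decide),
      Finset.sum_insert (by decide), Finset.sum_singleton,
      sig_2, sig_02, sig_12, sig_012,
      show (({0,2} : Finset (Fin 3)).card) = 2 from by decide]
    norm_num
    ring
  refine ⟨by rw [s0, m0], by rw [m0]; ring, by rw [s1, m1], m1, s2⟩
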